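/- Let Γ be a group generated by two elements whose abelianization is a free abelian group of rank 2. Then every non-surjective homomorphism Γ → A4 has abelian image, the number of conjugacy classes of non-surjective homomorphisms Γ → A4 equals 14, and the number of conjugacy classes of surjective homomorphisms Γ → A4 is 0, 2, 4, 6 or 8. -/

import Mathlib

/-- The conjugation equivalence on homomorphisms `Γ →* G`. -/
def homConj (Γ G : Type*) [Group Γ] [Group G] : Setoid (Γ →* G) where
  r φ ψ := ∃ g : G, ∀ x, ψ x = g * φ x * g⁻¹
  iseqv := by
    refine ⟨fun φ => ⟨1, by simp⟩, ?_, ?_⟩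
    · rintro φ ψ ⟨g, hg⟩
      exact ⟨g⁻¹, fun x => by rw [hg x]; group⟩
    · rintro φ ψ χ ⟨g, hg⟩ ⟨h, hh⟩
      exact ⟨h * g, fun x => by rw [hh x, hg x]; group⟩

/-- `ks G Γ`: number of conjugacy classes of homomorphisms `Γ →* G`. -/
noncomputable def ks (G Γ : Type*) [Group G] [Group Γ] : ℕ :=
  Nat.card (Quotient (homConj Γ G))

/-- `ksw G Γ`: number of homomorphisms `Γ →* G`. -/
noncomputable def ksw (G Γ : Type*) [Group G] [Group Γ] : ℕ :=
  Nat.card (Γ →* G)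

/-- `ksSub G H Γ`: the number of conjugacy classes of homomorphisms `Γ →* G` whose
image is contained in some subgroup of `G` isomorphic to `H`. -/
noncomputable def ksSub (G : Type*) [Group G] (H : Type*) [Group H] (Γ : Type*) [Group Γ] : ℕ :=
  Nat.card (Quotient (Setoid.comap
    (Subtype.val : {φ : Γ →* G // ∃ K : Subgroup G, Nonempty (K ≃* H) ∧ φ.range ≤ K} → (Γ →* G))
    (homConj Γ G)))

/-- Number of conjugacy classes of homomorphisms `Γ →* G` satisfying a property `P`. -/
noncomputable def ksRestrict (G Γ : Type*) [Group G] [Group Γ] (P : (Γ →* G) → Prop) : ℕ :=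
  Nat.card (Quotient (Setoid.comap
    (Subtype.val : {φ : Γ →* G // P φ} → (Γ →* G)) (homConj Γ G)))

/-- A maximal abelian subgroup. -/
def IsMaximalAbelian {G : Type*} [Group G] (K : Subgroup G) : Prop :=
  IsMulCommutative K ∧ ∀ K' : Subgroup G, IsMulCommutative K' → K ≤ K' → K' = K

abbrev A4 : Type := alternatingGroup (Fin 4)
abbrev A5 : Type := alternatingGroup (Fin 5)
abbrev V4 : Type := Multiplicative (ZMod 2 × ZMod 2)
abbrev Z3 : Type := Multiplicative (ZMod 3)
abbrev Z5 : Type := Multiplicative (ZMod 5)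
/-- The free abelian group of rank `g`, written multiplicatively. -/
abbrev Zg (g : ℕ) : Type := Multiplicative (Fin g → ℤ)

/- ===================== auxiliary lemmas ===================== -/

section AuxGeneral

open Subgroup

/-- Two homs agreeing on a generating pair agree. -/
theorem hom_ext_of_gen {Γ G : Type*} [Group Γ] [Group G] {a b : Γ}
    (h : Subgroup.closure {a, b} = ⊤) {φ ψ : Γ →* G}
    (ha : φ a = ψ a) (hb : φ b = ψ b) : φ = ψ := by
  apply MonoidHom.eq_of_eqOn_top
  rw [← h]
  apply MonoidHom.eqOn_closure
  rintro x (rfl | rfl)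
  · exact ha
  · exact hb

/-- A group generated by two commuting elements is abelian. -/
theorem comm_of_gen_comm {G : Type*} [Group G] {x y : G}
    (h : Subgroup.closure {x, y} = ⊤) (hc : x * y = y * x) :
    ∀ u v : G, u * v = v * u := by
  have h1 : ∀ u : G, x * u = u * x ∧ y * u = u * y := by
    intro u
    have hle : Subgroup.closure {x, y} ≤ Subgroup.centralizer {x, y} := by
      rw [Subgroup.closure_le]
      rintro z (rfl | rfl) <;> rw [SetLike.mem_coe, Subgroup.mem_centralizer_iff] <;>
        rintro g (rfl | rfl)
      · rfl
      · exact hc.symm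
      · exact hc
      · rfl
    have hu : u ∈ Subgroup.centralizer {x, y} := hle (h ▸ Subgroup.mem_top u)
    rw [Subgroup.mem_centralizer_iff] at hu
    exact ⟨hu x (by simp), hu y (by simp)⟩
  intro u v
  have hle : Subgroup.closure {x, y} ≤ Subgroup.centralizer {u} := by
    rw [Subgroup.closure_le]
    rintro z (rfl | rfl) <;> rw [SetLike.mem_coe, Subgroup.mem_centralizer_iff] <;>
      rintro g (rfl)
    · exact ((h1 g).1).symm
    · exact ((h1 g).2).symm
  have hv : v ∈ Subgroup.centralizer {u} := hle (h ▸ Subgroup.mem_top v)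
  rw [Subgroup.mem_centralizer_iff] at hv
  exact hv u (by simp)

private lemma even_aux : ∀ (n : ℕ) (α : Type) [Fintype α] [DecidableEq α],
    Fintype.card α = n → ∀ f : α → α, (∀ x, f (f x) = x) → (∀ x, f x ≠ x) → Even n := by
  intro n
  induction n using Nat.strong_induction_on with
  | _ n ih =>
    intro α _ _ hcard f h2 h1
    rcases n.eq_zero_or_pos with h0 | hpos
    · exact h0 ▸ Even.zero
    have hne : Nonempty α := Fintype.card_pos_iff.mp (hcard ▸ hpos)
    obtain ⟨a⟩ := hne
    have hafa : a ≠ f a := Ne.symm (h1 a)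
    set s : Finset α := {a, f a} with hs
    have hcs : s.card = 2 := by
      rw [hs, Finset.card_insert_of_notMem (by simpa using hafa), Finset.card_singleton]
    have hn2 : 2 ≤ n := by
      calc 2 = s.card := hcs.symm
      _ ≤ Fintype.card α := Finset.card_le_univ s
      _ = n := hcard
    have hβ : Fintype.card {x : α // ¬ x ∈ s} = n - 2 := by
      rw [Fintype.card_subtype_compl, hcard]
      congr 1
      exact (Fintype.card_coe s).trans hcs
    have hmem : ∀ x : {x : α // ¬ x ∈ s}, ¬ f x.1 ∈ s := by
      rintro ⟨x, hx⟩
      simp only [hs, Finset.mem_insert, Finset.mem_singleton, not_or] at hx ⊢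
      refine ⟨fun h => hx.2 ((h2 x).symm.trans (congrArg f h)), fun h => hx.1 ?_⟩
      have := congrArg f h
      rwa [h2, h2] at this
    have heven := ih (n - 2) (by omega) {x : α // ¬ x ∈ s} hβ
      (fun x => ⟨f x.1, hmem x⟩) (fun x => Subtype.ext (h2 x.1))
      (fun x hx => h1 x.1 (congrArg Subtype.val hx))
    obtain ⟨k, hk⟩ := heven
    exact ⟨k + 1, by omega⟩

/-- A finite type with a fixed-point-free involution has even cardinality. -/
theorem even_card_of_fpf {α : Type*} [Finite α] (f : α → α)
    (h2 : ∀ x, f (f x) = x) (h1 : ∀ x, f x ≠ x) : Even (Nat.card α) := by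
  have := Fintype.ofFinite α
  classical
  obtain ⟨e⟩ : Nonempty (α ≃ Fin (Fintype.card α)) := ⟨Fintype.equivFin α⟩
  rw [Nat.card_eq_fintype_card]
  refine even_aux _ (Fin (Fintype.card α)) (by simp) (fun x => e (f (e.symm x))) ?_ ?_
  · intro x; simp [h2]
  · intro x hx
    exact h1 (e.symm x) (by simpa using congrArg e.symm hx)

end AuxGeneral
section AuxA4

/-- conjugation setoid on pairs -/
def pairSetoid (G : Type*) [Group G] : Setoid (G × G) where
  r p q := ∃ g : G, q.1 = g * p.1 * g⁻¹ ∧ q.2 = g * p.2 * g⁻¹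
  iseqv := by
    refine ⟨fun p => ⟨1, by simp⟩, ?_, ?_⟩
    · rintro p q ⟨g, h1, h2⟩
      exact ⟨g⁻¹, by rw [h1]; group, by rw [h2]; group⟩
    · rintro p q r ⟨g, h1, h2⟩ ⟨k, h3, h4⟩
      exact ⟨k * g, by rw [h3, h1]; group, by rw [h4, h2]; group⟩

abbrev CommP : Type := {p : A4 × A4 // p.1 * p.2 = p.2 * p.1}
abbrev NCP : Type := {p : A4 × A4 // p.1 * p.2 ≠ p.2 * p.1}

def commSetoid : Setoid CommP := Setoid.comap Subtype.val (pairSetoid A4)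
def ncSetoid : Setoid NCP := Setoid.comap Subtype.val (pairSetoid A4)

instance decPairRel : DecidableRel (pairSetoid A4).r := fun p q =>
  inferInstanceAs (Decidable (∃ g : A4, q.1 = g * p.1 * g⁻¹ ∧ q.2 = g * p.2 * g⁻¹))

instance : Fintype (Quotient commSetoid) :=
  @Quotient.fintype _ _ commSetoid (fun p q => decPairRel p.val q.val)
instance : Fintype (Quotient ncSetoid) :=
  @Quotient.fintype _ _ ncSetoid (fun p q => decPairRel p.val q.val)

lemma A4_nonabelian : ∃ x y : A4, x * y ≠ y * x := by decide

lemma A4_pow23 : ∀ g : A4, g ^ 2 = 1 ∨ g ^ 3 = 1 := by decide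

lemma A4_card : Nat.card A4 = 12 := by rw [Nat.card_eq_fintype_card]; decide

lemma A4_cube_card : Nat.card {g : A4 // g ^ 3 = 1} = 9 := by
  rw [Nat.card_eq_fintype_card]; decide

set_option maxRecDepth 40000 in
set_option maxRecDepth 40000 in
lemma card_commQuot : Nat.card (Quotient commSetoid) = 14 := by
  rw [Nat.card_eq_fintype_card]; decide

set_option maxRecDepth 40000 in
set_option maxRecDepth 40000 in
lemma card_ncQuot : Nat.card (Quotient ncSetoid) = 8 := by
  rw [Nat.card_eq_fintype_card]; decide

/-- Every proper subgroup of `A4` is abelian. -/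
theorem A4_proper_comm {K : Subgroup A4} (hK : K ≠ ⊤) :
    ∀ x ∈ K, ∀ y ∈ K, x * y = y * x := by
  have hdvd : Nat.card K ∣ 12 := A4_card ▸ Subgroup.card_subgroup_dvd_card K
  have hpos : 0 < Nat.card K := Nat.card_pos
  have hne12 : Nat.card K ≠ 12 := by
    intro h
    exact hK (Subgroup.eq_top_of_card_eq K (by rw [h, A4_card]))
  have hne6 : Nat.card K ≠ 6 := by
    intro h6
    have hidx : K.index = 2 := by
      have := Subgroup.card_mul_index K
      rw [h6, A4_card] at this
      omega
    have hsq : ∀ g : A4, g * g ∈ K := fun g =>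
      (Subgroup.mul_mem_iff_of_index_two hidx).mpr Iff.rfl
    have hcube : ∀ g : {g : A4 // g ^ 3 = 1}, (g : A4) ∈ K := by
      rintro ⟨g, hg⟩
      have hmem4 : (g * g) * (g * g) ∈ K := hsq (g * g)
      have h3 : g * g * g = 1 := by
        have := hg
        rw [pow_succ, pow_succ, pow_one] at this
        exact this
      have hg4 : (g * g) * (g * g) = g := by
        calc (g * g) * (g * g) = g * g * g * g := (mul_assoc (g * g) g g).symm
        _ = 1 * g := by rw [h3]
        _ = g := one_mul g
      rwa [hg4] at hmem4
    have hle : Nat.card {g : A4 // g ^ 3 = 1} ≤ Nat.card K := by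
      refine Nat.card_le_card_of_injective (fun g => (⟨g.1, hcube g⟩ : K)) ?_
      intro g h hgh
      have hv : ((⟨g.1, hcube g⟩ : K) : A4) = ((⟨h.1, hcube h⟩ : K) : A4) :=
        congrArg Subtype.val hgh
      exact Subtype.ext hv
    rw [A4_cube_card, h6] at hle
    omega
  -- now card K ∈ {1,2,3,4}
  have horder : ∀ x ∈ K, orderOf x ∣ Nat.card K := fun x hx =>
    Subgroup.orderOf_dvd_natCard K hx
  have hcases : Nat.card K = 1 ∨ Nat.card K = 2 ∨ Nat.card K = 3 ∨ Nat.card K = 4 := by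
    have hle : Nat.card K ≤ 12 := Nat.le_of_dvd (by norm_num) hdvd
    interval_cases h : (Nat.card K) <;> revert hdvd <;> simp_all <;> omega
  have hsq_comm : (∀ x ∈ K, x * x = 1) → ∀ x ∈ K, ∀ y ∈ K, x * y = y * x := by
    intro hall x hx y hy
    have hxy : (x * y) * (x * y) = 1 := hall _ (K.mul_mem hx hy)
    have hx2 : x * x = 1 := hall x hx
    have hy2 : y * y = 1 := hall y hy
    have hinv : ∀ a ∈ K, a⁻¹ = a := fun a ha => inv_eq_of_mul_eq_one_right (hall a ha)
    calc x * y = (x * y)⁻¹ := (hinv _ (K.mul_mem hx hy)).symm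
    _ = y⁻¹ * x⁻¹ := mul_inv_rev x y
    _ = y * x := by rw [hinv x hx, hinv y hy]
  have hprime : ∀ p : ℕ, p.Prime → Nat.card K = p →
      ∀ x ∈ K, ∀ y ∈ K, x * y = y * x := by
    intro p hp hcard x hx y hy
    haveI : Fact p.Prime := ⟨hp⟩
    haveI : IsCyclic K := isCyclic_of_prime_card hcard
    letI : CommGroup K := IsCyclic.commGroup
    have := mul_comm (⟨x, hx⟩ : K) (⟨y, hy⟩ : K)
    exact congrArg Subtype.val this
  rcases hcases with h | h | h | h
  · intro x hx y hy
    rw [Subgroup.card_eq_one] at h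
    rw [h, Subgroup.mem_bot] at hx hy
    rw [hx, hy]
  · exact hprime 2 (by norm_num) h
  · exact hprime 3 (by norm_num) h
  · -- card 4 : exponent 2
    refine hsq_comm ?_
    intro x hx
    have hdvd4 : orderOf x ∣ 4 := by have := horder x hx; rw [h] at this; exact this
    rcases A4_pow23 x with h2 | h3
    · rw [← pow_two, h2]
    · have h3' : orderOf x ∣ 3 := orderOf_dvd_of_pow_eq_one h3
      have hd1 : orderOf x ∣ 1 := by
        have := Nat.dvd_gcd h3' hdvd4
        rwa [show Nat.gcd 3 4 = 1 by decide] at this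
      have hx1 : x = 1 := orderOf_eq_one_iff.mp (Nat.dvd_one.mp hd1)
      rw [hx1, one_mul]

end AuxA4
section AuxZg

abbrev ZG2 : Type := Zg 2

def u2 : ZG2 := Multiplicative.ofAdd (Pi.single 0 1)
def v2 : ZG2 := Multiplicative.ofAdd (Pi.single 1 1)

lemma Zg2_eq (m : ZG2) :
    u2 ^ (Multiplicative.toAdd m 0) * v2 ^ (Multiplicative.toAdd m 1) = m := by
  apply Multiplicative.toAdd.injective
  funext i
  simp only [toAdd_mul, toAdd_zpow, Pi.add_apply, Pi.smul_apply, smul_eq_mul, u2, v2,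
    toAdd_ofAdd]
  fin_cases i <;> simp [Pi.single_apply]

def pairHom {G : Type*} [Group G] (x y : G) (h : x * y = y * x) : ZG2 →* G where
  toFun m := x ^ (Multiplicative.toAdd m 0) * y ^ (Multiplicative.toAdd m 1)
  map_one' := by simp
  map_mul' m n := by
    have hc : Commute x y := h
    simp only [toAdd_mul, Pi.add_apply, zpow_add]
    rw [Commute.mul_mul_mul_comm ((hc.symm).zpow_zpow _ _)]

lemma hom_eq_pow {G : Type*} [Group G] (ψ : ZG2 →* G) (m : ZG2) :
    ψ m = ψ u2 ^ (Multiplicative.toAdd m 0) * ψ v2 ^ (Multiplicative.toAdd m 1) := by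
  rw [← map_zpow, ← map_zpow, ← map_mul, Zg2_eq]

def homPairEquiv : (ZG2 →* A4) ≃ CommP where
  toFun ψ := ⟨(ψ u2, ψ v2), by rw [← map_mul, ← map_mul, mul_comm u2 v2]⟩
  invFun p := pairHom p.1.1 p.1.2 p.2
  left_inv ψ := by
    apply MonoidHom.ext
    intro m
    rw [hom_eq_pow ψ m]
    rfl
  right_inv p := by
    apply Subtype.ext
    apply Prod.ext
    · show p.1.1 ^ (Multiplicative.toAdd u2 0) * p.1.2 ^ (Multiplicative.toAdd u2 1) = p.1.1
      simp [u2, Pi.single_apply]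
    · show p.1.1 ^ (Multiplicative.toAdd v2 0) * p.1.2 ^ (Multiplicative.toAdd v2 1) = p.1.2
      simp [v2, Pi.single_apply]

lemma homConj_iff_pair (ψ ψ' : ZG2 →* A4) :
    (homConj ZG2 A4).r ψ ψ' ↔ commSetoid.r (homPairEquiv ψ) (homPairEquiv ψ') := by
  constructor
  · rintro ⟨g, hg⟩
    exact ⟨g, hg u2, hg v2⟩
  · rintro ⟨g, h1, h2⟩
    refine ⟨g, fun m => ?_⟩
    have h1' : ψ' u2 = g * ψ u2 * g⁻¹ := h1
    have h2' : ψ' v2 = g * ψ v2 * g⁻¹ := h2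
    rw [hom_eq_pow ψ' m, h1', h2', conj_zpow, conj_zpow, hom_eq_pow ψ m]
    group

end AuxZg
section AuxOuter

/-- The outer automorphism of `A4` given by conjugation with the transposition `(0 1)`. -/
noncomputable def sigmaA4 : MulAut A4 := MulAut.conjNormal (Equiv.swap (0 : Fin 4) 1)

lemma sigmaA4_apply (x : A4) :
    (sigmaA4 x : Equiv.Perm (Fin 4)) =
      Equiv.swap 0 1 * (x : Equiv.Perm (Fin 4)) * (Equiv.swap 0 1)⁻¹ :=
  MulAut.conjNormal_apply _ _

lemma sigmaA4_sigmaA4 (x : A4) : sigmaA4 (sigmaA4 x) = x := by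
  apply Subtype.ext
  rw [sigmaA4_apply, sigmaA4_apply]
  simp [Equiv.swap_inv, ← mul_assoc, Equiv.swap_mul_self]

lemma tau_not_inner : ∀ g : A4, ∃ x : A4,
    Equiv.swap (0 : Fin 4) 1 * (x : Equiv.Perm (Fin 4)) * (Equiv.swap (0 : Fin 4) 1)⁻¹ ≠
      (g : Equiv.Perm (Fin 4)) * (x : Equiv.Perm (Fin 4)) * (g : Equiv.Perm (Fin 4))⁻¹ := by
  decide

lemma sigmaA4_not_inner (g : A4) : ∃ x : A4, sigmaA4 x ≠ g * x * g⁻¹ := by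
  obtain ⟨x, hx⟩ := tau_not_inner g
  refine ⟨x, fun h => hx ?_⟩
  rw [← sigmaA4_apply, h]
  simp

end AuxOuter

theorem statement_13 (Γ : Type*) [Group Γ]
    (hgen : ∃ a b : Γ, Subgroup.closure {a, b} = (⊤ : Subgroup Γ))
    (hab : Nonempty (Abelianization Γ ≃* Zg 2)) :
    (∀ φ : Γ →* A4, ¬Function.Surjective φ → ∀ x y : Γ, φ x * φ y = φ y * φ x) ∧
    ksRestrict A4 Γ (fun φ => ¬Function.Surjective φ) = 14 ∧
    (ksRestrict A4 Γ (fun φ => Function.Surjective φ) = 0 ∨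
      ksRestrict A4 Γ (fun φ => Function.Surjective φ) = 2 ∨
      ksRestrict A4 Γ (fun φ => Function.Surjective φ) = 4 ∨
      ksRestrict A4 Γ (fun φ => Function.Surjective φ) = 6 ∨
      ksRestrict A4 Γ (fun φ => Function.Surjective φ) = 8) := by
  obtain ⟨a, b, hgenab⟩ := hgen
  obtain ⟨e⟩ := hab
  have part1 : ∀ φ : Γ →* A4, ¬Function.Surjective φ → ∀ x y : Γ, φ x * φ y = φ y * φ x := by
    intro φ hφ x y
    have hne : φ.range ≠ ⊤ := fun h => hφ (MonoidHom.range_eq_top.mp h)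
    exact A4_proper_comm hne (φ x) (MonoidHom.mem_range.mpr ⟨x, rfl⟩) (φ y) (MonoidHom.mem_range.mpr ⟨y, rfl⟩)
  have hfin : Finite (Γ →* A4) := by
    refine Finite.of_injective (fun φ => ((φ a, φ b) : A4 × A4)) ?_
    intro φ ψ h
    rw [Prod.mk.injEq] at h
    exact hom_ext_of_gen hgenab h.1 h.2
  refine ⟨part1, ?_, ?_⟩
  -- Part 2
  · let π : Γ →* Zg 2 := e.toMonoidHom.comp Abelianization.of
    have hπ : Function.Surjective π := by
      have h1 : Function.Surjective (Abelianization.of : Γ →* Abelianization Γ) :=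
        fun q => QuotientGroup.mk_surjective q
      exact e.surjective.comp h1
    have hBns : ∀ ψ : Zg 2 →* A4, ¬Function.Surjective ⇑(ψ.comp π) := by
      intro ψ hs
      obtain ⟨x, y, hxy⟩ := A4_nonabelian
      obtain ⟨x', hx'⟩ := hs x
      obtain ⟨y', hy'⟩ := hs y
      apply hxy
      rw [← hx', ← hy']
      show ψ (π x') * ψ (π y') = ψ (π y') * ψ (π x')
      rw [← map_mul ψ (π x') (π y'), ← map_mul ψ (π y') (π x'), mul_comm (π x') (π y')]
    let B0 : (Zg 2 →* A4) → {φ : Γ →* A4 // ¬Function.Surjective ⇑φ} :=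
      fun ψ => ⟨ψ.comp π, hBns ψ⟩
    have hB0 : Function.Bijective B0 := by
      constructor
      · intro ψ1 ψ2 h
        have h' : ψ1.comp π = ψ2.comp π := congrArg Subtype.val h
        apply MonoidHom.ext
        intro m
        obtain ⟨x, rfl⟩ := hπ m
        exact DFunLike.congr_fun h' x
      · rintro ⟨φ, hφ⟩
        have hker : commutator Γ ≤ φ.ker := by
          rw [commutator_def, Subgroup.commutator_le]
          intro g1 _ g2 _
          rw [MonoidHom.mem_ker, map_commutatorElement,
            commutatorElement_eq_one_iff_commute]
          exact part1 φ hφ g1 g2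
        refine ⟨((QuotientGroup.lift (commutator Γ) φ (fun x hx => hker hx) :
            Abelianization Γ →* A4).comp e.symm.toMonoidHom), ?_⟩
        apply Subtype.ext
        apply MonoidHom.ext
        intro x
        show (QuotientGroup.lift (commutator Γ) φ (fun x hx => hker hx))
          (e.symm (e (Abelianization.of x))) = φ x
        rw [MulEquiv.symm_apply_apply]
        rfl
    let B := Equiv.ofBijective B0 hB0
    have hiff1 : ∀ ψ1 ψ2 : Zg 2 →* A4, (homConj (Zg 2) A4) ψ1 ψ2 ↔
        (Setoid.comap (Subtype.val : {φ : Γ →* A4 // ¬Function.Surjective ⇑φ} → (Γ →* A4))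
          (homConj Γ A4)) (B ψ1) (B ψ2) := by
      intro ψ1 ψ2
      rw [Setoid.comap_rel]
      constructor
      · rintro ⟨g, hg⟩
        exact ⟨g, fun x => hg (π x)⟩
      · rintro ⟨g, hg⟩
        refine ⟨g, fun m => ?_⟩
        obtain ⟨x, rfl⟩ := hπ m
        exact hg x
    calc ksRestrict A4 Γ (fun φ => ¬Function.Surjective φ)
        = Nat.card (Quotient (Setoid.comap
            (Subtype.val : {φ : Γ →* A4 // ¬Function.Surjective ⇑φ} → (Γ →* A4))
            (homConj Γ A4))) := rfl
      _ = Nat.card (Quotient (homConj (Zg 2) A4)) :=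
          (Nat.card_congr (Quotient.congr B hiff1)).symm
      _ = Nat.card (Quotient commSetoid) :=
          Nat.card_congr (Quotient.congr homPairEquiv homConj_iff_pair)
      _ = 14 := card_commQuot
  -- Part 3
  · set S := {φ : Γ →* A4 // Function.Surjective ⇑φ} with hS
    let sd : Setoid S := Setoid.comap (Subtype.val : S → (Γ →* A4)) (homConj Γ A4)
    have hQ : ksRestrict A4 Γ (fun φ => Function.Surjective φ) = Nat.card (Quotient sd) := rfl
    haveI : Finite S := Subtype.finite
    have hgenpair : ∀ φ : S, φ.1 a * φ.1 b ≠ φ.1 b * φ.1 a := by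
      intro φ hcomm
      have hcl : Subgroup.closure ({φ.1 a, φ.1 b} : Set A4) = ⊤ := by
        rw [← Set.image_pair, ← MonoidHom.map_closure, hgenab, ← MonoidHom.range_eq_map]
        exact MonoidHom.range_eq_top.mpr φ.2
      obtain ⟨x, y, hxy⟩ := A4_nonabelian
      exact hxy (comm_of_gen_comm hcl hcomm x y)
    have hresp : ∀ φ ψ : S, sd φ ψ →
        (Quotient.mk ncSetoid ⟨(φ.1 a, φ.1 b), hgenpair φ⟩ : Quotient ncSetoid) =
          Quotient.mk ncSetoid ⟨(ψ.1 a, ψ.1 b), hgenpair ψ⟩ := by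
      intro φ ψ hr
      obtain ⟨g, hg⟩ := hr
      exact Quotient.sound ⟨g, hg a, hg b⟩
    let J : Quotient sd → Quotient ncSetoid :=
      Quotient.lift (fun φ : S => Quotient.mk ncSetoid ⟨(φ.1 a, φ.1 b), hgenpair φ⟩) hresp
    have hJ : Function.Injective J := by
      have key : ∀ φ ψ : S, J (Quotient.mk sd φ) = J (Quotient.mk sd ψ) →
          Quotient.mk sd φ = Quotient.mk sd ψ := by
        intro φ ψ h
        obtain ⟨g, h1, h2⟩ := Quotient.exact h
        apply Quotient.sound
        have hχ : (MulAut.conj g).toMonoidHom.comp φ.1 = ψ.1 := by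
          apply hom_ext_of_gen hgenab
          · show g * φ.1 a * g⁻¹ = ψ.1 a
            exact h1.symm
          · show g * φ.1 b * g⁻¹ = ψ.1 b
            exact h2.symm
        refine ⟨g, fun x => ?_⟩
        rw [← hχ]
        rfl
      intro q1 q2
      exact Quotient.inductionOn₂ q1 q2 key
    have hle : Nat.card (Quotient sd) ≤ 8 := by
      have := Nat.card_le_card_of_injective J hJ
      rwa [card_ncQuot] at this
    have hsurjcomp : ∀ φ : S, Function.Surjective ⇑(sigmaA4.toMonoidHom.comp φ.1) := by
      intro φ
      have hco : ⇑(sigmaA4.toMonoidHom.comp φ.1) = ⇑sigmaA4 ∘ ⇑φ.1 := rfl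
      rw [hco]
      exact sigmaA4.surjective.comp φ.2
    let F0 : S → S := fun φ => ⟨sigmaA4.toMonoidHom.comp φ.1, hsurjcomp φ⟩
    have hFresp : ∀ φ ψ : S, sd φ ψ → sd (F0 φ) (F0 ψ) := by
      intro φ ψ hr
      obtain ⟨g, hg⟩ := hr
      refine ⟨sigmaA4 g, fun x => ?_⟩
      show sigmaA4 (ψ.1 x) = sigmaA4 g * sigmaA4 (φ.1 x) * (sigmaA4 g)⁻¹
      rw [hg x]
      rw [map_mul, map_mul, map_inv]
    let F : Quotient sd → Quotient sd := Quotient.map F0 hFresp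
    have hF2 : ∀ q, F (F q) = q := by
      have key : ∀ φ : S, F (F (Quotient.mk sd φ)) = Quotient.mk sd φ := by
        intro φ
        show Quotient.mk sd (F0 (F0 φ)) = Quotient.mk sd φ
        congr 1
        apply Subtype.ext
        apply MonoidHom.ext
        intro x
        exact sigmaA4_sigmaA4 (φ.1 x)
      intro q
      exact Quotient.inductionOn q key
    have hF1 : ∀ q, F q ≠ q := by
      have key : ∀ φ : S, F (Quotient.mk sd φ) ≠ Quotient.mk sd φ := by
        intro φ h
        have h' : Quotient.mk sd (F0 φ) = Quotient.mk sd φ := h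
        obtain ⟨g, hg⟩ := Quotient.exact h'
        obtain ⟨y, hy⟩ := sigmaA4_not_inner g⁻¹
        obtain ⟨x, rfl⟩ := φ.2 y
        apply hy
        have h1 : φ.1 x = g * sigmaA4 (φ.1 x) * g⁻¹ := hg x
        rw [inv_inv]
        calc sigmaA4 (φ.1 x) = g⁻¹ * (g * sigmaA4 (φ.1 x) * g⁻¹) * g := by group
        _ = g⁻¹ * φ.1 x * g := by rw [← h1]
      intro q
      exact Quotient.inductionOn q key
    have heven : Even (Nat.card (Quotient sd)) := even_card_of_fpf F hF2 hF1
    rw [hQ]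
    obtain ⟨k, hk⟩ := heven
    omega
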